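/- arXiv:1010.2577 — 3 statements merged into one kernel-verified Lean document; each statement's English description precedes it below -/
import Mathlib

section
/- Let M be a negative definite symmetric bilinear form on a real vector space V (or more generally negative semi-definite with radical spanned by a vector f). If B ∈ V satisfies B ≠ 0 and B is not proportional to f, then there exists a basis vector (component) E of B with M(B, E) < 0 when B is written as a nonnegative combination of basis vectors each pairing nonnegatively with distinct other basis vectors. -/
open Matrix

/-- Zariski-lemma consequence: for a negative semi-definite symmetric pairing `M`
whose radical is spanned by `f`, any nonnegative vector `b ≠ 0` not proportional
to `f` has a component `i` with `b i > 0` pairing negatively with `b`. -/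
theorem stmt_3 {k : ℕ} (M : Matrix (Fin k) (Fin k) ℝ) (hsymm : M.IsSymm)
    (hnegsemi : ∀ v : Fin k → ℝ, v ⬝ᵥ M.mulVec v ≤ 0)
    (f : Fin k → ℝ)
    (hrad : ∀ v : Fin k → ℝ, M.mulVec v = 0 ↔ ∃ c : ℝ, v = c • f)
    (b : Fin k → ℝ) (hb0 : ∀ i, 0 ≤ b i) (hbne : b ≠ 0)
    (hbf : ¬∃ c : ℝ, b = c • f) :
    ∃ i, 0 < b i ∧ M.mulVec b i < 0 := by
  -- `-M` is positive semidefinite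
  have hpsd : (-M).PosSemidef := by
    rw [posSemidef_iff_dotProduct_mulVec]
    constructor
    · unfold Matrix.IsHermitian
      rw [conjTranspose_neg]
      have : Mᴴ = M := by
        rw [conjTranspose_eq_transpose_of_trivial]; exact hsymm
      rw [this]
    · intro x
      have := hnegsemi x
      simp only [neg_mulVec, dotProduct_neg, RCLike.star_def]
      have hx : star x = x := by
        funext i; simp
      rw [hx]
      simpa using neg_nonneg.mpr this
  -- M b ≠ 0
  have hMb : M.mulVec b ≠ 0 := fun h => hbf ((hrad b).mp h)
  -- strict negativity of b ⬝ M b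
  have hstrict : b ⬝ᵥ M.mulVec b < 0 := by
    rcases lt_or_eq_of_le (hnegsemi b) with h | h
    · exact h
    · exfalso
      apply hMb
      have hz : star b ⬝ᵥ (-M) *ᵥ b = 0 := by
        have hb : star b = b := by funext i; simp
        rw [hb]
        simp [neg_mulVec, h]
      have := (hpsd.dotProduct_mulVec_zero_iff b).mp hz
      have := neg_eq_zero.mp (by simpa [neg_mulVec] using this)
      exact this
  -- find a component
  by_contra hcon
  push_neg at hcon
  have hsum : 0 ≤ b ⬝ᵥ M.mulVec b := by
    rw [dotProduct]
    apply Finset.sum_nonneg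
    intro i _
    rcases eq_or_lt_of_le (hb0 i) with h | h
    · rw [← h]; simp
    · exact mul_nonneg (hb0 i) (hcon i h)
  exact absurd hstrict (not_lt.mpr hsum)
end

section
/- Let M be a symmetric, negative semi-definite real k×k matrix whose kernel is spanned by a positive vector f. If b is a vector with all entries nonnegative and Mb has all entries nonnegative (i.e., Mb ≥ 0 componentwise, using that b pairs nonnegatively with each coordinate vector), then Mb = 0 and b is proportional to f. -/
open Matrix

/-- A nonnegative vector `b` with `M b ≥ 0` componentwise, for `M` symmetric
negative semi-definite with kernel spanned by a positive vector `f`,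
satisfies `M b = 0` and `b` is proportional to `f`. -/
theorem stmt_6 {k : ℕ} (M : Matrix (Fin k) (Fin k) ℝ) (hsymm : M.IsSymm)
    (hnegsemi : ∀ v : Fin k → ℝ, v ⬝ᵥ M.mulVec v ≤ 0)
    (f : Fin k → ℝ) (hf : ∀ i, 0 < f i)
    (hker : ∀ v : Fin k → ℝ, M.mulVec v = 0 ↔ ∃ c : ℝ, v = c • f)
    (b : Fin k → ℝ) (hb0 : ∀ i, 0 ≤ b i) (hMb : ∀ i, 0 ≤ M.mulVec b i) :
    M.mulVec b = 0 ∧ ∃ c : ℝ, b = c • f := by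
  have hsym : ∀ v w : Fin k → ℝ, v ⬝ᵥ M.mulVec w = w ⬝ᵥ M.mulVec v := by
    intro v w
    rw [dotProduct_mulVec, ← Matrix.mulVec_transpose, hsymm.eq, dotProduct_comm]
  have hbMb : b ⬝ᵥ M.mulVec b = 0 := by
    refine le_antisymm (hnegsemi b) ?_
    exact Finset.sum_nonneg fun i _ => mul_nonneg (hb0 i) (hMb i)
  have key : ∀ v : Fin k → ℝ, v ⬝ᵥ M.mulVec b = 0 := by
    intro v
    set a := v ⬝ᵥ M.mulVec v with ha_def
    set c := v ⬝ᵥ M.mulVec b with hc_def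
    have ha : a ≤ 0 := hnegsemi v
    have hq : ∀ t : ℝ, t ^ 2 * a + 2 * t * c ≤ 0 := by
      intro t
      have h := hnegsemi (b + t • v)
      have hexp : (b + t • v) ⬝ᵥ M.mulVec (b + t • v)
          = b ⬝ᵥ M.mulVec b + t * (b ⬝ᵥ M.mulVec v) + (t * c + t ^ 2 * a) := by
        simp only [Matrix.mulVec_add, Matrix.mulVec_smul, add_dotProduct,
          dotProduct_add, smul_dotProduct, dotProduct_smul, smul_eq_mul, smul_smul,
          ha_def, hc_def]
        ring
      rw [hexp, hsym b v, hbMb] at h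
      nlinarith [h]
    rcases lt_or_eq_of_le ha with ha' | ha'
    · have h1 := hq (-c / a)
      have ha2 : a ≠ 0 := ne_of_lt ha'
      have heq : (-c / a) ^ 2 * a + 2 * (-c / a) * c = -(c ^ 2) / a := by
        field_simp; ring
      have h2 : -(c ^ 2) / a ≤ 0 := heq ▸ h1
      have h3 : 0 ≤ -(-(c ^ 2) / a) * (-a) :=
        mul_nonneg (neg_nonneg.mpr h2) (neg_nonneg.mpr ha)
      have h4 : -(-(c ^ 2) / a) * (-a) = -(c ^ 2) := by field_simp
      have hc2 : c ^ 2 = 0 := by nlinarith [sq_nonneg c]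
      exact pow_eq_zero_iff (by norm_num) |>.mp hc2
    · have h1 := hq 1
      have h2 := hq (-1)
      rw [← ha'] at h1 h2
      nlinarith
  have hMb0 : M.mulVec b = 0 := by
    funext i
    have := key (Pi.single i 1)
    simpa using this
  exact ⟨hMb0, (hker b).mp hMb0⟩
end

section
/- Let M be a negative definite symmetric real k×k matrix with m_{ij} ≥ 0 for all i ≠ j. If b ∈ ℝᵏ satisfies (Mb)ᵢ ≥ 0 for all i, then bᵢ ≤ 0 for all i. -/
open Matrix

/-- Negativity lemma: for a negative definite symmetric real matrix with
nonnegative off-diagonal entries, `M b ≥ 0` componentwise implies `b ≤ 0`. -/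
theorem stmt_15 {k : ℕ} (M : Matrix (Fin k) (Fin k) ℝ) (hsymm : M.IsSymm)
    (hoff : ∀ i j, i ≠ j → 0 ≤ M i j)
    (hnegdef : ∀ v : Fin k → ℝ, v ≠ 0 → v ⬝ᵥ M.mulVec v < 0)
    (b : Fin k → ℝ) (hMb : ∀ i, 0 ≤ M.mulVec b i) :
    ∀ i, b i ≤ 0 := by
  set p : Fin k → ℝ := fun i => max (b i) 0 with hp
  set n : Fin k → ℝ := fun i => max (-(b i)) 0 with hn
  have hpn : ∀ i, b i + n i = p i := by
    intro i
    rcases le_total (b i) 0 with h | h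
    · simp [hp, hn, max_eq_right h, max_eq_left (neg_nonneg.mpr h)]
    · simp [hp, hn, max_eq_left h, max_eq_right (neg_nonpos.mpr h)]
  have hp0 : ∀ i, 0 ≤ p i := fun i => le_max_right _ _
  have hn0 : ∀ i, 0 ≤ n i := fun i => le_max_right _ _
  have horth : ∀ i, p i * n i = 0 := by
    intro i
    rcases le_total (b i) 0 with h | h
    · simp [hp, max_eq_right h]
    · simp [hn, max_eq_right (neg_nonpos.mpr h)]
  have key : 0 ≤ p ⬝ᵥ M.mulVec p := by
    have hpbn : p = b + n := funext fun i => ((hpn i).symm.trans (Pi.add_apply b n i).symm)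
    have hsplit : M.mulVec p = M.mulVec b + M.mulVec n := by
      rw [hpbn, Matrix.mulVec_add]
    rw [hsplit, dotProduct_add]
    have h1 : 0 ≤ p ⬝ᵥ M.mulVec b :=
      Finset.sum_nonneg fun i _ => mul_nonneg (hp0 i) (hMb i)
    have h2 : 0 ≤ p ⬝ᵥ M.mulVec n := by
      apply Finset.sum_nonneg
      intro i _
      rw [Matrix.mulVec, dotProduct, Finset.mul_sum]
      apply Finset.sum_nonneg
      intro j _
      by_cases hij : i = j
      · subst hij
        have : p i * (M i i * n i) = M i i * (p i * n i) := by ring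
        rw [this, horth i, mul_zero]
      · exact mul_nonneg (hp0 i) (mul_nonneg (hoff i j hij) (hn0 j))
    linarith
  have hpz : p = 0 := by
    by_contra h
    exact absurd key (not_le.mpr (hnegdef p h))
  intro i
  have : p i = 0 := congrFun hpz i
  have := le_max_left (b i) 0
  linarith [this, congrFun hpz i]
end
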